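/- Let (W_n)_{n≥0} be an odometer based construction sequence with coefficient sequence (k_n) and limit K, and let ν be any shift-invariant Borel probability measure on K. Then the parsing map φ : K → O into the odometer O associated to (k_n) (defined by φ(x)_n = r_{n+1}(x) mod K_{n+1}) is Borel measurable, satisfies φ ∘ sh = T_O ∘ φ, and the pushforward φ_*ν equals the Haar probability measure on O. In particular, any shift-invariant measure on the limit of an odometer based construction sequence has the corresponding odometer as a measure-theoretic factor. -/

import Mathlib

open MeasureTheory

set_option linter.unusedSectionVars false
namespace OdoPaper

/-- The shift map `sh` on bi-infinite sequences: `(sh x)(n) = x(n+1)`. -/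
def shift {σ : Type*} (x : ℤ → σ) : ℤ → σ := fun m => x (m + 1)

/-- The `n`-th iterate (`n : ℤ`) of the shift map: `(shiftZ n x)(m) = x(m+n)`. -/
def shiftZ {σ : Type*} (n : ℤ) (x : ℤ → σ) : ℤ → σ := fun m => x (m + n)

/-- `Kseq k n = K_n`, where `K_0 = 1` and `K_{n+1} = K_n * k_n`. -/
def Kseq (k : ℕ → ℕ) : ℕ → ℕ
  | 0 => 1
  | n + 1 => Kseq k n * k n

/-- Compatibility of a sequence `x` with `x n : ZMod (K_{n+1})` under the canonical
projections `ZMod (K_{n+2}) → ZMod (K_{n+1})`. -/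
def odoCompat (k : ℕ → ℕ) (x : ∀ n : ℕ, ZMod (Kseq k (n + 1))) : Prop :=
  ∀ n : ℕ, ZMod.castHom (dvd_mul_right (Kseq k (n + 1)) (k (n + 1)))
      (ZMod (Kseq k (n + 1))) (x (n + 1)) = x n

/-- The odometer associated to the coefficient sequence `k`, as an additive subgroup of
`∏_n ZMod (K_{n+1})`. -/
def odometerSubgroup (k : ℕ → ℕ) : AddSubgroup (∀ n : ℕ, ZMod (Kseq k (n + 1))) where
  carrier := { x | odoCompat k x }
  zero_mem' := by intro n; exact map_zero _
  add_mem' := by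
    intro a b ha hb n
    exact (map_add (ZMod.castHom _ _) (a (n + 1)) (b (n + 1))).trans (congrArg₂ (· + ·) (ha n) (hb n))
  neg_mem' := by
    intro a ha n
    exact (map_neg (ZMod.castHom _ _) (a (n + 1))).trans (congrArg Neg.neg (ha n))

/-- The odometer `O` associated to the coefficient sequence `k`. -/
abbrev Odometer (k : ℕ → ℕ) := ↥(odometerSubgroup k)

/-- The element `1̄ = (1 mod K_{n+1})_n` of the odometer. -/
def oneBar (k : ℕ → ℕ) : Odometer k := ⟨fun _ => 1, fun _ => map_one _⟩

/-- The odometer map `T_O` : translation by `1̄`. -/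
def odoMap (k : ℕ → ℕ) (x : Odometer k) : Odometer k := x + oneBar k

/-- Each factor `ZMod m` carries the discrete topology. -/
instance (n : ℕ) : TopologicalSpace (ZMod n) := ⊥
instance (n : ℕ) : DiscreteTopology (ZMod n) := ⟨rfl⟩
/-- Each factor `ZMod m` carries the discrete (Borel) σ-algebra; the product σ-algebra
on `∏_n ZMod (K_{n+1})` (and hence the subtype σ-algebra on the odometer) is then the
Borel σ-algebra of the product topology. -/
instance (n : ℕ) : MeasurableSpace (ZMod n) := ⊤
instance (n : ℕ) : DiscreteMeasurableSpace (ZMod n) := ⟨fun _ => trivial⟩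

/-- `w` occurs as a contiguous subword of `l` starting at position `p`. -/
def occursAt {σ : Type*} (w l : List σ) (p : ℕ) : Prop :=
  p + w.length ≤ l.length ∧ (l.drop p).take w.length = w

/-- The finite contiguous subword `x↾[a, a+m)` of `x : ℤ → σ`. -/
def subwordAt {σ : Type*} (x : ℤ → σ) (a : ℤ) (m : ℕ) : List σ :=
  List.ofFn (fun i : Fin m => x (a + i))

/-- The limit `K` of a construction sequence: all bi-infinite sequences each of whose finite
contiguous subwords occurs as a contiguous subword of some word in some `W n`. -/
def CSLimit {σ : Type*} (W : ℕ → Set (List σ)) : Set (ℤ → σ) :=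
  { x | ∀ (a : ℤ) (m : ℕ), ∃ n, ∃ w ∈ W n, ∃ p, occursAt (subwordAt x a m) w p }

/-- `(W_n)` is an odometer based construction sequence over the finite alphabet `σ` with
coefficient sequence `k`:  `W 0` consists of the one-letter words; every word of `W n` has
length `K_n`; every word of `W (n+1)` is a concatenation of `k n` words from `W n`; each
`W n` is uniquely readable; and every `n`-word occurs in every `(n+1)`-word. -/
structure OdometerBasedCS (σ : Type*) [Fintype σ] (k : ℕ → ℕ) (W : ℕ → Set (List σ)) :
    Prop where
  two_le : ∀ n, 2 ≤ k n
  w_zero : W 0 = { l : List σ | ∃ a : σ, l = [a] }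
  nonempty : ∀ n, (W n).Nonempty
  finite : ∀ n, (W n).Finite
  length_eq : ∀ n, ∀ w ∈ W n, w.length = Kseq k n
  concat : ∀ n, ∀ w' ∈ W (n + 1),
    ∃ g : Fin (k n) → List σ, (∀ i, g i ∈ W n) ∧ w' = (List.ofFn g).flatten
  unique_readable : ∀ n, ∀ u ∈ W n, ∀ v ∈ W n, ∀ w ∈ W n, ∀ p,
    occursAt w (u ++ v) p → p = 0 ∨ p = Kseq k n
  subword : ∀ n, ∀ w ∈ W n, ∀ w' ∈ W (n + 1), ∃ p, occursAt w w' p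

/-- `μ` is the Haar probability measure on the odometer: the unique translation-invariant
Borel probability measure on the compact group `O`. -/
def IsHaarProb {k : ℕ → ℕ} (μ : Measure (Odometer k)) : Prop :=
  IsProbabilityMeasure μ ∧ ∀ g : Odometer k, Measure.map (fun x => g + x) μ = μ


section Lemmas
variable {α : Type*} [Fintype α] {k : ℕ → ℕ} {W : ℕ → Set (List α)}

@[simp] lemma subword_length (x : ℤ → α) (a : ℤ) (m : ℕ) :
    (subwordAt x a m).length = m := by simp [subwordAt]

lemma subword_getElem (x : ℤ → α) (a : ℤ) (m : ℕ) (i : ℕ)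
    (h : i < (subwordAt x a m).length) : (subwordAt x a m)[i] = x (a + i) := by
  simp [subwordAt, List.getElem_ofFn]

lemma subword_append (x : ℤ → α) (a : ℤ) (m₁ m₂ : ℕ) :
    subwordAt x a (m₁ + m₂) = subwordAt x a m₁ ++ subwordAt x (a + m₁) m₂ := by
  apply List.ext_getElem (by simp)
  intro i h1 h2
  rw [subword_getElem, List.getElem_append]
  simp only [subword_length]
  split_ifs with h
  · rw [subword_getElem]
  · rw [subword_getElem]
    congr 1
    push_cast [Nat.cast_sub (Nat.le_of_not_lt h)]
    ring

lemma subword_extract (x : ℤ → α) (a : ℤ) (m p q : ℕ) (h : p + q ≤ m) :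
    ((subwordAt x a m).drop p).take q = subwordAt x (a + p) q := by
  apply List.ext_getElem
  · simp [subword_length]; omega
  · intro i h1 h2
    have hi : i < q := by simpa [subword_length] using h2
    rw [List.getElem_take, List.getElem_drop, subword_getElem, subword_getElem]
    push_cast
    ring

lemma flatten_extract : ∀ {c : ℕ} (g : Fin c → List α) (K : ℕ),
    (∀ i, (g i).length = K) → ∀ (i : Fin c),
    (((List.ofFn g).flatten.drop (i * K)).take K) = g i := by
  intro c
  induction c with
  | zero => exact fun g K hg i => absurd i.2 (by omega)
  | succ c ih =>
    intro g K hg i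
    rw [List.ofFn_succ, List.flatten_cons]
    refine Fin.cases ?_ ?_ i
    · simp only [Fin.val_zero, Nat.zero_mul, List.drop_zero]
      rw [← hg 0, List.take_left]
    · intro j
      have : ((j.succ : Fin (c+1)) : ℕ) * K = (g 0).length + (j : ℕ) * K := by
        rw [hg 0, Fin.val_succ]; ring
      rw [this, List.drop_append, Nat.add_sub_cancel_left,
        List.drop_eq_nil_of_le (Nat.le_add_right _ _), List.nil_append]
      exact ih (fun i => g i.succ) K (fun i => hg i.succ) j

lemma Kpos (hW : OdometerBasedCS α k W) : ∀ n, 0 < Kseq k n := by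
  intro n
  induction n with
  | zero => exact Nat.one_pos
  | succ n ih => exact Nat.mul_pos ih (lt_of_lt_of_le Nat.zero_lt_two (hW.two_le n))

lemma Kdvd {n m : ℕ} (h : n ≤ m) : Kseq k n ∣ Kseq k m := by
  induction m with
  | zero => simp_all
  | succ m ih =>
    rcases Nat.lt_succ_iff_lt_or_eq.mp (Nat.lt_succ_of_le h) with h' | h'
    · exact dvd_mul_of_dvd_left (ih (Nat.lt_succ_iff.mp h')) _
    · subst h'; exact dvd_rfl

lemma take_of_mem (hW : OdometerBasedCS α k W) {n : ℕ} {v : List α} (hv : v ∈ W n) :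
    (v.drop 0).take (Kseq k n) = v := by
  rw [List.drop_zero, ← hW.length_eq n v hv, List.take_length]

lemma parse_step (hW : OdometerBasedCS α k W) {m : ℕ} {v : List α} (hv : v ∈ W (m + 1))
    {q : ℕ} (hq : q < k m) :
    ((v.drop (q * Kseq k m)).take (Kseq k m)) ∈ W m := by
  obtain ⟨g, hg, rfl⟩ := hW.concat m v hv
  rw [show q * Kseq k m = ((⟨q, hq⟩ : Fin (k m)) : ℕ) * Kseq k m from rfl,
    flatten_extract g (Kseq k m) (fun i => hW.length_eq m _ (hg i))]
  exact hg _

lemma parse_down (hW : OdometerBasedCS α k W) :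
    ∀ m n, n ≤ m → ∀ v ∈ W m, ∀ q : ℕ, (q + 1) * Kseq k n ≤ Kseq k m →
    ((v.drop (q * Kseq k n)).take (Kseq k n)) ∈ W n := by
  intro m
  induction m with
  | zero =>
    intro n hn v hv q hq
    interval_cases n
    have hK : 0 < Kseq k 0 := Kpos hW 0
    have : q = 0 := by nlinarith
    subst this
    rw [Nat.zero_mul, take_of_mem hW hv]
    exact hv
  | succ m ih =>
    intro n hn v hv q hq
    have hKn : 0 < Kseq k n := Kpos hW n
    rcases Nat.lt_succ_iff_lt_or_eq.mp (Nat.lt_succ_of_le hn) with h' | h'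
    · have hnm : n ≤ m := Nat.lt_succ_iff.mp h'
      have hdvd : Kseq k n ∣ Kseq k m := Kdvd hnm
      set c := Kseq k m / Kseq k n with hc
      have hcK : c * Kseq k n = Kseq k m := Nat.div_mul_cancel hdvd
      have hKm : 0 < Kseq k m := Kpos hW m
      have hcpos : 0 < c := Nat.pos_of_ne_zero (by intro h0; rw [h0] at hcK; omega)
      have hqlt : q < c * k m := by
        have h1 : (q + 1) * Kseq k n ≤ (c * k m) * Kseq k n := by
          calc (q+1) * Kseq k n ≤ Kseq k (m+1) := hq
            _ = Kseq k m * k m := rfl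
            _ = (c * k m) * Kseq k n := by rw [← hcK]; ring
        nlinarith
      have hi : q / c < k m := by
        rw [Nat.div_lt_iff_lt_mul hcpos]
        exact lt_of_lt_of_eq hqlt (mul_comm c (k m))
      have hv' := parse_step hW hv hi
      have hrc : q % c < c := Nat.mod_lt _ hcpos
      have key : (v.drop (q * Kseq k n)).take (Kseq k n)
          = (((v.drop (q / c * Kseq k m)).take (Kseq k m)).drop (q % c * Kseq k n)).take
              (Kseq k n) := by
        rw [List.drop_take, List.drop_drop, List.take_take]
        have harith : q * Kseq k n = q / c * Kseq k m + q % c * Kseq k n := by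
          have hq' : q = c * (q / c) + q % c := (Nat.div_add_mod q c).symm
          calc q * Kseq k n = (c * (q / c) + q % c) * Kseq k n := by rw [← hq']
            _ = q / c * (c * Kseq k n) + q % c * Kseq k n := by ring
            _ = q / c * Kseq k m + q % c * Kseq k n := by rw [hcK]
        have hmin : min (Kseq k n) (Kseq k m - q % c * Kseq k n) = Kseq k n := by
          apply min_eq_left
          have h3 : (q % c + 1) * Kseq k n ≤ c * Kseq k n := Nat.mul_le_mul_right _ (by omega)
          rw [hcK, Nat.succ_mul] at h3
          exact Nat.le_sub_of_add_le (by linarith)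
        rw [harith, hmin]
      rw [key]
      exact ih n hnm _ hv' (q % c) (by
        have : (q % c + 1) * Kseq k n ≤ c * Kseq k n := Nat.mul_le_mul_right _ (by omega)
        rwa [hcK] at this)
    · subst h'
      have hK : 0 < Kseq k (m+1) := Kpos hW (m+1)
      have : q = 0 := by nlinarith
      subst this
      rw [Nat.zero_mul, take_of_mem hW hv]
      exact hv

lemma occursAt_trans {w v u : List α} {p p' : ℕ} (h1 : occursAt w v p)
    (h2 : occursAt v u p') : occursAt w u (p' + p) := by
  obtain ⟨hl1, he1⟩ := h1
  obtain ⟨hl2, he2⟩ := h2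
  refine ⟨by omega, ?_⟩
  conv_rhs => rw [← he1]
  conv_rhs => rw [← he2]
  rw [List.drop_take, List.drop_drop, List.take_take]
  congr 1
  omega

lemma occursAt_self {v : List α} : occursAt v v 0 := ⟨by omega, by simp⟩

lemma occurs_in_higher (hW : OdometerBasedCS α k W) :
    ∀ (m' m : ℕ), m ≤ m' → ∀ v ∈ W m, ∃ v' ∈ W m', ∃ p, occursAt v v' p := by
  intro m'
  induction m' with
  | zero =>
    intro m h v hv
    interval_cases m
    exact ⟨v, hv, 0, occursAt_self⟩
  | succ m' ih =>
    intro m h v hv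
    rcases Nat.lt_succ_iff_lt_or_eq.mp (Nat.lt_succ_of_le h) with h' | h'
    · obtain ⟨v', hv', p, hocc⟩ := ih m (Nat.lt_succ_iff.mp h') v hv
      obtain ⟨v'', hv''⟩ := hW.nonempty (m' + 1)
      obtain ⟨p', hocc'⟩ := hW.subword m' v' hv' v'' hv''
      exact ⟨v'', hv'', p' + p, occursAt_trans hocc hocc'⟩
    · subst h'
      exact ⟨v, hv, 0, occursAt_self⟩

lemma limit_occurs (hW : OdometerBasedCS α k W) {x : ℤ → α} (hx : x ∈ CSLimit W)
    (a : ℤ) (m N : ℕ) :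
    ∃ m', N ≤ m' ∧ ∃ v ∈ W m', ∃ p, occursAt (subwordAt x a m) v p := by
  obtain ⟨n₀, w, hw, p₀, hocc⟩ := hx a m
  obtain ⟨v, hv, p', hocc'⟩ := occurs_in_higher hW (max n₀ N) n₀ (le_max_left _ _) w hw
  exact ⟨max n₀ N, le_max_right _ _, v, hv, p' + p₀, occursAt_trans hocc hocc'⟩

lemma window_parse (hW : OdometerBasedCS α k W) {x : ℤ → α} (hx : x ∈ CSLimit W)
    (N M : ℕ) (hM : 1 ≤ M) :
    ∃ a : ℤ, -(Kseq k N : ℤ) < a ∧ a ≤ 0 ∧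
      ∀ j : ℤ, 1 - (M : ℤ) ≤ j → j ≤ (M : ℤ) - 1 →
        subwordAt x (a + j * (Kseq k N : ℤ)) (Kseq k N) ∈ W N := by
  set K := Kseq k N with hKdef
  have hK : 0 < K := Kpos hW N
  set L := 2 * M * K with hLdef
  have hLz : (L : ℤ) = 2 * (M : ℤ) * K := by push_cast [hLdef]; ring
  obtain ⟨m, hmN, v, hv, p, hocc⟩ := limit_occurs hW hx (-((M * K : ℕ) : ℤ)) L N
  have hvlen : v.length = Kseq k m := hW.length_eq m v hv
  obtain ⟨hlen, hext⟩ := hocc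
  rw [subword_length] at hlen hext
  rw [hvlen] at hlen
  set s := p + M * K with hs
  have hmod : s % K < K := Nat.mod_lt s hK
  refine ⟨-((s % K : ℕ) : ℤ), by omega, by omega, ?_⟩
  intro j hj1 hj2
  set a : ℤ := -((s % K : ℕ) : ℤ) with ha
  have ha0 : a ≤ 0 := by omega
  have haK : -(K : ℤ) < a := by omega
  have hd0 : 0 ≤ a + (j + M) * K := by
    nlinarith [mul_nonneg (by omega : (0:ℤ) ≤ j + M - 1) (by positivity : (0:ℤ) ≤ (K:ℤ))]
  set D : ℕ := (a + (j + M) * K).toNat with hDdef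
  have hD : (D : ℤ) = a + (j + M) * K := Int.toNat_of_nonneg hd0
  have hDKz : (D : ℤ) + K ≤ (L : ℤ) := by
    rw [hD, hLz]
    nlinarith [mul_nonneg (by omega : (0:ℤ) ≤ (M:ℤ) - 1 - j) (by positivity : (0:ℤ) ≤ (K:ℤ))]
  have hDK : D + K ≤ L := by exact_mod_cast hDKz
  have haddr : (-((M * K : ℕ) : ℤ)) + (D : ℤ) = a + j * K := by
    rw [hD]; push_cast; ring
  have hA : subwordAt x (a + j * (K : ℤ)) K
      = ((subwordAt x (-((M * K : ℕ) : ℤ)) L).drop D).take K := by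
    rw [subword_extract x _ _ _ _ hDK, haddr]
  have hB : ((subwordAt x (-((M * K : ℕ) : ℤ)) L).drop D).take K
      = (v.drop (p + D)).take K := by
    rw [← hext, List.drop_take, List.drop_drop, List.take_take]
    congr 1
    omega
  have hsdiv : M ≤ s / K := (Nat.le_div_iff_mul_le hK).mpr (by rw [hs]; exact Nat.le_add_left _ _)
  have hjq : 0 ≤ ((s / K : ℕ) : ℤ) + j := by
    have h5 : (M : ℤ) ≤ ((s / K : ℕ) : ℤ) := by exact_mod_cast hsdiv
    omega
  set q : ℕ := (((s / K : ℕ) : ℤ) + j).toNat with hqdef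
  have hqe : (q : ℤ) = ((s / K : ℕ) : ℤ) + j := Int.toNat_of_nonneg hjq
  have hsm : (s : ℤ) = (K : ℤ) * ((s / K : ℕ) : ℤ) + ((s % K : ℕ) : ℤ) := by
    exact_mod_cast (Nat.div_add_mod s K).symm
  have hps : (p : ℤ) = (s : ℤ) - M * K := by
    have h6 : (s : ℤ) = (p : ℤ) + (M : ℤ) * K := by push_cast [hs]; ring
    linarith
  have hpd : ((p : ℤ) + D) = ((q : ℤ)) * K := by
    rw [hD, hqe, hps, hsm, ha]; ring
  have hpq : p + D = q * K := by exact_mod_cast hpd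
  have hqbound : (q + 1) * K ≤ Kseq k m := by
    have h1 : q * K + K ≤ p + L := by rw [← hpq]; omega
    calc (q + 1) * K = q * K + K := by ring
      _ ≤ p + L := h1
      _ ≤ Kseq k m := hlen
  have hfin := parse_down hW m N hmN v hv q hqbound
  rw [hA, hB, hpq]
  exact hfin

lemma align (hW : OdometerBasedCS α k W) {N : ℕ} {x : ℤ → α} {a₁ a₂ : ℤ}
    (h₁ : -(Kseq k N : ℤ) < a₁) (h₁' : a₁ ≤ 0) (h₂ : -(Kseq k N : ℤ) < a₂) (h₂' : a₂ ≤ 0)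
    (hb1 : subwordAt x a₁ (Kseq k N) ∈ W N)
    (hb2 : ∀ j : ℤ, -1 ≤ j → j ≤ 1 → subwordAt x (a₂ + j * (Kseq k N : ℤ)) (Kseq k N) ∈ W N) :
    a₁ = a₂ := by
  set K := Kseq k N with hKdef
  have hK : 0 < K := Kpos hW N
  have key : ∀ j₀ : ℤ, -1 ≤ j₀ → j₀ ≤ 0 → 0 ≤ a₁ - (a₂ + j₀ * K) →
      a₁ - (a₂ + j₀ * K) < K → a₁ = a₂ + j₀ * K := by
    intro j₀ hj₀1 hj₀2 hge hlt
    set b : ℤ := a₂ + j₀ * K with hb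
    set p : ℕ := (a₁ - b).toNat with hp
    have hpz : (p : ℤ) = a₁ - b := Int.toNat_of_nonneg hge
    have hpK : p < K := by omega
    have hu : subwordAt x b K ∈ W N := by
      have := hb2 j₀ hj₀1 (by omega); exact this
    have hvv : subwordAt x (b + K) K ∈ W N := by
      have := hb2 (j₀ + 1) (by omega) (by omega)
      have he : a₂ + (j₀ + 1) * (K : ℤ) = b + K := by rw [hb]; ring
      rwa [he] at this
    have happ : subwordAt x b K ++ subwordAt x (b + K) K = subwordAt x b (K + K) := by
      rw [subword_append]
    have hocc : occursAt (subwordAt x a₁ K) (subwordAt x b K ++ subwordAt x (b + K) K) p := by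
      constructor
      · simp only [subword_length, List.length_append]; omega
      · rw [happ, subword_length, subword_extract x b (K + K) p K (by omega)]
        congr 1
        omega
    rcases hW.unique_readable N _ hu _ hvv _ hb1 p hocc with h0 | h0
    · omega
    · omega
  rcases le_or_gt a₂ a₁ with h | h
  · have := key 0 (by omega) (by omega) (by omega) (by omega)
    omega
  · have := key (-1) (by omega) (by omega) (by omega) (by omega)
    omega

/-- `a` is a valid level-`N` parsing offset for `x`. -/
def POff (k : ℕ → ℕ) (W : ℕ → Set (List α)) (N : ℕ) (x : ℤ → α) (a : ℤ) : Prop :=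
  -(Kseq k N : ℤ) < a ∧ a ≤ 0 ∧
    ∀ j : ℤ, subwordAt x (a + j * (Kseq k N : ℤ)) (Kseq k N) ∈ W N

lemma parse_unique (hW : OdometerBasedCS α k W) {N : ℕ} {x : ℤ → α} {a a' : ℤ}
    (h1 : POff k W N x a) (h2 : POff k W N x a') : a = a' := by
  refine align hW h1.1 h1.2.1 h2.1 h2.2.1 (by simpa using h1.2.2 0) (fun j _ _ => h2.2.2 j)

lemma parse_exists (hW : OdometerBasedCS α k W) {x : ℤ → α} (hx : x ∈ CSLimit W) (N : ℕ) :
    ∃ a, POff k W N x a := by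
  obtain ⟨a, haK, ha0, hb⟩ := window_parse hW hx N 2 (by norm_num)
  refine ⟨a, haK, ha0, ?_⟩
  intro j
  obtain ⟨a', haK', ha0', hb'⟩ := window_parse hW hx N (j.natAbs + 2) (by omega)
  have heq : a = a' := by
    refine align hW haK ha0 haK' ha0' (by simpa using hb 0 (by norm_num) (by norm_num))
      (fun j' hj1 hj2 => hb' j' (by omega) (by omega))
  rw [heq]
  exact hb' j (by omega) (by omega)

lemma parse_refine (hW : OdometerBasedCS α k W) {N : ℕ} {x : ℤ → α} {a' : ℤ}
    (h : POff k W (N + 1) x a') :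
    ∀ j : ℤ, subwordAt x (a' + j * (Kseq k N : ℤ)) (Kseq k N) ∈ W N := by
  intro j
  set K := Kseq k N with hKdef
  have hK : 0 < K := Kpos hW N
  set c : ℤ := (k N : ℤ) with hc
  have hcpos : (0:ℤ) < c := by
    have := hW.two_le N; omega
  have hblk := h.2.2 (j / c)
  have hmod0 : 0 ≤ j % c := Int.emod_nonneg j (by omega)
  have hmodc : j % c < c := Int.emod_lt_of_pos j hcpos
  set i : ℕ := (j % c).toNat with hi
  have hiz : (i : ℤ) = j % c := Int.toNat_of_nonneg hmod0
  have hik : i < k N := by omega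
  have hKK : (Kseq k (N + 1) : ℤ) = (K : ℤ) * c := by
    show ((Kseq k N * k N : ℕ) : ℤ) = _
    push_cast
    rfl
  have hle : i * K + K ≤ Kseq k (N + 1) := by
    have : (i + 1) * K ≤ k N * K := Nat.mul_le_mul_right _ (by omega)
    calc i * K + K = (i + 1) * K := by ring
      _ ≤ k N * K := this
      _ = Kseq k (N + 1) := by show _ = Kseq k N * k N; ring
  have hkey : subwordAt x (a' + j * (K : ℤ)) K
      = ((subwordAt x (a' + (j / c) * (Kseq k (N+1) : ℤ)) (Kseq k (N+1))).drop (i * K)).take K := by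
    rw [subword_extract x _ _ _ _ hle]
    congr 1
    push_cast [hiz, hKK]
    linear_combination (-(K : ℤ)) * (Int.mul_ediv_add_emod j c)
  rw [hkey]
  exact parse_step hW hblk hik

lemma subword_shift (x : ℤ → α) (a : ℤ) (m : ℕ) :
    subwordAt (shift x) a m = subwordAt x (a + 1) m := by
  apply List.ext_getElem (by simp)
  intro i h1 h2
  rw [subword_getElem, subword_getElem]
  show x (a + i + 1) = x (a + 1 + i)
  congr 1
  ring

lemma shift_mem_limit {x : ℤ → α} (hx : x ∈ CSLimit W) : shift x ∈ CSLimit W := by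
  intro a m
  rw [subword_shift]
  exact hx (a + 1) m

lemma parse_shift (hW : OdometerBasedCS α k W) {N : ℕ} {x : ℤ → α} {a : ℤ}
    (h : POff k W N x a) :
    ∃ b, POff k W N (shift x) b ∧ (b = a - 1 ∨ b = a - 1 + Kseq k N) := by
  obtain ⟨h1, h2, h3⟩ := h
  rcases lt_or_ge (-(Kseq k N : ℤ)) (a - 1) with hc | hc
  · refine ⟨a - 1, ⟨hc, by omega, ?_⟩, Or.inl rfl⟩
    intro j
    rw [subword_shift]
    have he : a - 1 + j * (Kseq k N : ℤ) + 1 = a + j * (Kseq k N : ℤ) := by ring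
    rw [he]
    exact h3 j
  · have hK : 0 < Kseq k N := Kpos hW N
    refine ⟨a - 1 + Kseq k N, ⟨by omega, by omega, ?_⟩, Or.inr rfl⟩
    intro j
    rw [subword_shift]
    have he : a - 1 + (Kseq k N : ℤ) + j * (Kseq k N : ℤ) + 1
        = a + (j + 1) * (Kseq k N : ℤ) := by ring
    rw [he]
    exact h3 (j + 1)

end Lemmas

section MeasLemmas
variable {α : Type*} [Fintype α] [MeasurableSpace α] [DiscreteMeasurableSpace α]
  {k : ℕ → ℕ} {W : ℕ → Set (List α)}

instance fin_pi_singleton (m : ℕ) : MeasurableSingletonClass (Fin m → α) := by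
  constructor
  intro f
  have : ({f} : Set (Fin m → α)) = ⋂ i, (fun g : Fin m → α => g i) ⁻¹' {f i} := by
    ext g; simp [funext_iff]
  rw [this]
  exact MeasurableSet.iInter fun i => (measurable_pi_apply i) (MeasurableSet.of_discrete)

lemma measurableSet_subword_mem (b : ℤ) (m : ℕ) (S : Set (List α)) :
    MeasurableSet {x : ℤ → α | subwordAt x b m ∈ S} := by
  have he : {x : ℤ → α | subwordAt x b m ∈ S}
      = (fun x : ℤ → α => (fun i : Fin m => x (b + i))) ⁻¹' {f : Fin m → α | List.ofFn f ∈ S} :=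
    rfl
  rw [he]
  exact (measurable_pi_lambda _ fun i => measurable_pi_apply _)
    ((Set.toFinite _).measurableSet)

lemma measurableSet_POff (N : ℕ) (a : ℤ) :
    MeasurableSet {x : ℤ → α | POff k W N x a} := by
  have he : {x : ℤ → α | POff k W N x a}
      = {x : ℤ → α | -(Kseq k N : ℤ) < a ∧ a ≤ 0} ∩
        ⋂ j : ℤ, {x : ℤ → α | subwordAt x (a + j * (Kseq k N : ℤ)) (Kseq k N) ∈ W N} := by
    ext x
    simp only [POff, Set.mem_inter_iff, Set.mem_setOf_eq, Set.mem_iInter]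
    tauto
  rw [he]
  exact (MeasurableSet.const _).inter
    (MeasurableSet.iInter fun j => measurableSet_subword_mem _ _ _)

lemma measurableSet_CSLimit : MeasurableSet (CSLimit W) := by
  have he : CSLimit W = ⋂ (a : ℤ), ⋂ (m : ℕ),
      {x : ℤ → α | subwordAt x a m ∈ {l : List α | ∃ n, ∃ w ∈ W n, ∃ p, occursAt l w p}} := by
    ext x
    simp only [CSLimit, Set.mem_iInter, Set.mem_setOf_eq]
  rw [he]
  exact MeasurableSet.iInter fun a => MeasurableSet.iInter fun m =>
    measurableSet_subword_mem _ _ _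

open Classical in
/-- `rfun k W n x` is the canonical representative `r ∈ [0, K_{n+1})` with `-r` the
level-`(n+1)` parsing offset of `x` (or junk `0` when no offset exists). -/
noncomputable def rfun (k : ℕ → ℕ) (W : ℕ → Set (List α)) (n : ℕ) (x : ℤ → α) : ℕ :=
  if h : ∃ r : ℕ, POff k W (n + 1) x (-(r : ℤ)) then Nat.find h else 0

lemma rfun_lt (hW : OdometerBasedCS α k W) (n : ℕ) (x : ℤ → α) :
    rfun k W n x < Kseq k (n + 1) := by
  classical
  unfold rfun
  split_ifs with h
  · have := Nat.find_spec h
    have h1 := this.1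
    omega
  · exact Kpos hW (n + 1)

lemma rfun_POff {n : ℕ} {x : ℤ → α} (h : ∃ a, POff k W (n + 1) x a) :
    POff k W (n + 1) x (-(rfun k W n x : ℤ)) := by
  obtain ⟨a, ha⟩ := h
  have hex : ∃ r : ℕ, POff k W (n + 1) x (-(r : ℤ)) := by
    refine ⟨(-a).toNat, ?_⟩
    have : -(((-a).toNat : ℕ) : ℤ) = a := by
      have := ha.2.1; omega
    rwa [this]
  classical
  unfold rfun
  rw [dif_pos hex]
  exact Nat.find_spec hex

lemma rfun_eq (hW : OdometerBasedCS α k W) {n : ℕ} {x : ℤ → α} {a : ℤ}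
    (ha : POff k W (n + 1) x a) : (rfun k W n x : ℤ) = -a := by
  have h1 := rfun_POff (W := W) ⟨a, ha⟩
  have h2 := parse_unique hW h1 ha
  omega

lemma measurableSet_rfun_eq (n r : ℕ) :
    MeasurableSet {x : ℤ → α | rfun k W n x = r} := by
  classical
  set A : ℕ → Set (ℤ → α) := fun r' => {x : ℤ → α | POff k W (n + 1) x (-(r' : ℤ))} with hA
  have hiff : ∀ x : ℤ → α, rfun k W n x = r ↔
      ((x ∈ A r ∧ ∀ r' < r, x ∉ A r') ∨ ((∀ r', x ∉ A r') ∧ r = 0)) := by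
    intro x
    unfold rfun
    split_ifs with h
    · rw [Nat.find_eq_iff h]
      constructor
      · intro ⟨h1, h2⟩; exact Or.inl ⟨h1, h2⟩
      · rintro (⟨h1, h2⟩ | ⟨h1, h2⟩)
        · exact ⟨h1, h2⟩
        · obtain ⟨r', hr'⟩ := h
          exact absurd hr' (h1 r')
    · push_neg at h
      constructor
      · intro h0
        exact Or.inr ⟨fun r' => h r', h0.symm⟩
      · rintro (⟨h1, _⟩ | ⟨_, h2⟩)
        · exact absurd h1 (h r)
        · exact h2.symm
  have he : {x : ℤ → α | rfun k W n x = r}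
      = ((A r ∩ ⋂ (r' : ℕ), ⋂ (_ : r' < r), (A r')ᶜ) ∪ ((⋂ r' : ℕ, (A r')ᶜ) ∩ {_x : ℤ → α | r = 0})) := by
    ext x
    rw [Set.mem_setOf_eq, hiff x]
    simp only [Set.mem_union, Set.mem_inter_iff, Set.mem_iInter, Set.mem_compl_iff,
      Set.mem_setOf_eq]
  rw [he]
  exact ((measurableSet_POff _ _).inter (MeasurableSet.iInter fun r' =>
      MeasurableSet.iInter fun _ => (measurableSet_POff _ _).compl)).union
    ((MeasurableSet.iInter fun r' => (measurableSet_POff _ _).compl).inter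
      (MeasurableSet.const _))

/-- Raw parsing data as an element of the product group. -/
noncomputable def phi0 (k : ℕ → ℕ) (W : ℕ → Set (List α)) (x : ℤ → α) :
    ∀ n : ℕ, ZMod (Kseq k (n + 1)) :=
  fun n => ((rfun k W n x : ℕ) : ZMod (Kseq k (n + 1)))

lemma measurable_phi0 (hW : OdometerBasedCS α k W) :
    Measurable (phi0 k W : (ℤ → α) → ∀ n : ℕ, ZMod (Kseq k (n + 1))) := by
  refine measurable_pi_lambda _ fun n => ?_
  haveI : NeZero (Kseq k (n + 1)) := ⟨by have := Kpos hW (n + 1); omega⟩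
  refine measurable_to_countable' fun c => ?_
  have he : (fun x : ℤ → α => ((rfun k W n x : ℕ) : ZMod (Kseq k (n + 1)))) ⁻¹' {c}
      = {x : ℤ → α | rfun k W n x = c.val} := by
    ext x
    simp only [Set.mem_preimage, Set.mem_singleton_iff, Set.mem_setOf_eq]
    constructor
    · intro h
      rw [← h, ZMod.val_natCast, Nat.mod_eq_of_lt (rfun_lt hW n x)]
    · intro h
      rw [h]
      simp [ZMod.natCast_val, ZMod.cast_id]
  exact he ▸ measurableSet_rfun_eq n c.val

/-- The "good set" on which the raw parsing data is compatible. -/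
def Cset (k : ℕ → ℕ) (W : ℕ → Set (List α)) : Set (ℤ → α) :=
  {x | odoCompat k (phi0 k W x)}

lemma measurableSet_Cset (hW : OdometerBasedCS α k W) : MeasurableSet (Cset k W) := by
  have he : Cset k W = ⋂ n : ℕ, ⋃ c : ZMod (Kseq k (n + 1)),
      ((fun x : ℤ → α => ZMod.castHom (dvd_mul_right (Kseq k (n + 1)) (k (n + 1)))
          (ZMod (Kseq k (n + 1))) (phi0 k W x (n + 1))) ⁻¹' {c}) ∩
        ((fun x : ℤ → α => phi0 k W x n) ⁻¹' {c}) := by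
    ext x
    simp only [Cset, odoCompat, Set.mem_setOf_eq, Set.mem_iInter, Set.mem_iUnion,
      Set.mem_inter_iff, Set.mem_preimage, Set.mem_singleton_iff]
    constructor
    · intro h n
      exact ⟨phi0 k W x n, h n, rfl⟩
    · intro h n
      obtain ⟨c, h1, h2⟩ := h n
      rw [h1, h2]
  rw [he]
  haveI : ∀ m : ℕ, Countable (ZMod (Kseq k (m + 1))) := fun m => by
    haveI : NeZero (Kseq k (m + 1)) := ⟨by have := Kpos hW (m + 1); omega⟩
    infer_instance
  refine MeasurableSet.iInter fun n => MeasurableSet.iUnion fun c => MeasurableSet.inter ?_ ?_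
  · exact (measurable_from_top.comp ((measurable_pi_apply (n + 1)).comp (measurable_phi0 hW)))
      (MeasurableSet.of_discrete)
  · exact ((measurable_pi_apply n).comp (measurable_phi0 hW)) (MeasurableSet.of_discrete)

open Classical in
/-- The parsing map `φ : K → O` (sends the junk set to `0`). -/
noncomputable def Phi (k : ℕ → ℕ) (W : ℕ → Set (List α)) : (ℤ → α) → Odometer k :=
  fun x => ⟨if x ∈ Cset k W then phi0 k W x else 0, by
    split_ifs with h
    · exact h
    · exact (odometerSubgroup k).zero_mem⟩

lemma measurable_Phi (hW : OdometerBasedCS α k W) : Measurable (Phi k W) := by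
  classical
  exact Measurable.subtype_mk
    (Measurable.ite (measurableSet_Cset hW) (measurable_phi0 hW) measurable_const)

lemma limit_subset_Cset (hW : OdometerBasedCS α k W) : CSLimit W ⊆ Cset k W := by
  intro x hx
  intro n
  set K := Kseq k (n + 1) with hKdef
  have hK : 0 < K := Kpos hW (n + 1)
  set r' : ℕ := rfun k W (n + 1) x with hr'
  have hup : POff k W (n + 2) x (-(r' : ℤ)) := rfun_POff (parse_exists hW hx (n + 2))
  have href := parse_refine hW hup
  have hmod0 : 0 ≤ (r' : ℤ) % (K : ℤ) := Int.emod_nonneg _ (by omega)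
  have hmodK : (r' : ℤ) % (K : ℤ) < K := Int.emod_lt_of_pos _ (by omega)
  have hPOff : POff k W (n + 1) x (-((r' : ℤ) % (K : ℤ))) := by
    refine ⟨by omega, by omega, ?_⟩
    intro j
    have h1 := href ((r' : ℤ) / (K : ℤ) + j)
    have he : -(r' : ℤ) + ((r' : ℤ) / (K : ℤ) + j) * (K : ℤ)
        = -((r' : ℤ) % (K : ℤ)) + j * (K : ℤ) := by
      linear_combination Int.emod_add_mul_ediv (r' : ℤ) (K : ℤ)
    rwa [he] at h1
  have hval : (rfun k W n x : ℤ) = (r' : ℤ) % (K : ℤ) := by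
    rw [rfun_eq hW hPOff]; ring
  have hvalN : rfun k W n x = r' % K := by
    have : ((r' % K : ℕ) : ℤ) = (r' : ℤ) % (K : ℤ) := by push_cast; rfl
    omega
  show ZMod.castHom _ _ (phi0 k W x (n + 1)) = phi0 k W x n
  rw [phi0, phi0]
  change ZMod.cast (((rfun k W (n + 1) x : ℕ) : ZMod (Kseq k (n + 1) * k (n + 1)))) =
    ((rfun k W n x : ℕ) : ZMod (Kseq k (n + 1)))
  rw [ZMod.cast_natCast (dvd_mul_right (Kseq k (n + 1)) (k (n + 1)))]
  rw [hvalN, ZMod.natCast_mod]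

lemma Phi_val_of_limit (hW : OdometerBasedCS α k W) {x : ℤ → α} (hx : x ∈ CSLimit W) :
    (Phi k W x).1 = phi0 k W x := by
  classical
  show (if x ∈ Cset k W then phi0 k W x else 0) = phi0 k W x
  rw [if_pos (limit_subset_Cset hW hx)]

lemma Phi_spec (hW : OdometerBasedCS α k W) {x : ℤ → α} (hx : x ∈ CSLimit W)
    (n : ℕ) (a : ℤ) (h : POff k W (n + 1) x a) :
    (Phi k W x).1 n = ((-a : ℤ) : ZMod (Kseq k (n + 1))) := by
  rw [Phi_val_of_limit hW hx]
  show ((rfun k W n x : ℕ) : ZMod (Kseq k (n + 1))) = _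
  have h1 : ((rfun k W n x : ℕ) : ℤ) = -a := rfun_eq hW h
  calc ((rfun k W n x : ℕ) : ZMod (Kseq k (n + 1)))
      = (((rfun k W n x : ℕ) : ℤ) : ZMod (Kseq k (n + 1))) := by push_cast; rfl
    _ = ((-a : ℤ) : ZMod (Kseq k (n + 1))) := by rw [h1]

lemma Phi_shift (hW : OdometerBasedCS α k W) {x : ℤ → α} (hx : x ∈ CSLimit W) :
    Phi k W (shift x) = odoMap k (Phi k W x) := by
  have hsx : shift x ∈ CSLimit W := shift_mem_limit hx
  apply Subtype.ext
  rw [Phi_val_of_limit hW hsx]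
  show phi0 k W (shift x) = (Phi k W x + oneBar k).1
  rw [AddSubgroup.coe_add]
  funext n
  set K := Kseq k (n + 1) with hKdef
  have hK : 0 < K := Kpos hW (n + 1)
  have hx1 : POff k W (n + 1) x (-(rfun k W n x : ℤ)) := rfun_POff (parse_exists hW hx (n + 1))
  obtain ⟨b, hb, hbe⟩ := parse_shift hW hx1
  have h2 : (rfun k W n (shift x) : ℤ) = -b := rfun_eq hW hb
  show ((rfun k W n (shift x) : ℕ) : ZMod K) = (Phi k W x).1 n + (1 : ZMod K)
  rw [Phi_val_of_limit hW hx]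
  show ((rfun k W n (shift x) : ℕ) : ZMod K) = ((rfun k W n x : ℕ) : ZMod K) + 1
  have hcast : ∀ m : ℕ, ((m : ℕ) : ZMod K) = (((m : ℕ) : ℤ) : ZMod K) := fun m => by
    push_cast; rfl
  rw [hcast, hcast, h2]
  rcases hbe with hbe | hbe
  · rw [hbe]
    push_cast
    ring
  · rw [hbe]
    push_cast [hKdef]
    rw [show ((Kseq k (n+1) : ℕ) : ZMod (Kseq k (n+1))) = 0 from ZMod.natCast_self _]
    ring

/-- Basic cylinder sets in the odometer. -/
def cylSet (k : ℕ → ℕ) (n : ℕ) (c : ZMod (Kseq k (n + 1))) : Set (Odometer k) :=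
  {y | y.1 n = c}

lemma measurableSet_cyl (n : ℕ) (c : ZMod (Kseq k (n + 1))) :
    MeasurableSet (cylSet k n c) := by
  have he : cylSet k n c = (fun y : Odometer k => y.1 n) ⁻¹' {c} := rfl
  rw [he]
  exact ((measurable_pi_apply n).comp measurable_subtype_coe) (MeasurableSet.of_discrete)

lemma top_eq_gen {β : Type*} [Countable β] :
    (⊤ : MeasurableSpace β) = MeasurableSpace.generateFrom {s : Set β | ∃ b, s = {b}} := by
  refine le_antisymm ?_ le_top
  intro s _
  have hs : s = ⋃ b ∈ s, {b} := by simp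
  rw [hs]
  exact MeasurableSet.biUnion (Set.to_countable s)
    (fun b _ => MeasurableSpace.measurableSet_generateFrom ⟨b, rfl⟩)

lemma iSup_gen {β : Type*} (G : ℕ → Set (Set β)) :
    (⨆ n, MeasurableSpace.generateFrom (G n)) = MeasurableSpace.generateFrom (⋃ n, G n) := by
  apply le_antisymm
  · exact iSup_le fun n => MeasurableSpace.generateFrom_mono (Set.subset_iUnion G n)
  · apply MeasurableSpace.generateFrom_le
    rintro s hs
    rw [Set.mem_iUnion] at hs
    obtain ⟨n, hn⟩ := hs
    exact le_iSup (fun n => MeasurableSpace.generateFrom (G n)) n _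
      (MeasurableSpace.measurableSet_generateFrom hn)

lemma odo_gen (hW : OdometerBasedCS α k W) :
    (inferInstance : MeasurableSpace (Odometer k))
      = MeasurableSpace.generateFrom {s : Set (Odometer k) | ∃ n c, s = cylSet k n c} := by
  haveI : ∀ m : ℕ, Countable (ZMod (Kseq k (m + 1))) := fun m => by
    haveI : NeZero (Kseq k (m + 1)) := ⟨by have := Kpos hW (m + 1); omega⟩
    infer_instance
  calc (inferInstance : MeasurableSpace (Odometer k))
      = MeasurableSpace.comap Subtype.val
          (⨆ n : ℕ, MeasurableSpace.comap (fun f => f n) (⊤ : MeasurableSpace (ZMod (Kseq k (n+1))))) := rfl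
    _ = ⨆ n : ℕ, MeasurableSpace.comap Subtype.val
          (MeasurableSpace.comap (fun f => f n) (⊤ : MeasurableSpace (ZMod (Kseq k (n+1))))) :=
        MeasurableSpace.comap_iSup
    _ = ⨆ n : ℕ, MeasurableSpace.comap (fun y : Odometer k => y.1 n)
          (⊤ : MeasurableSpace (ZMod (Kseq k (n+1)))) := by
        refine iSup_congr fun n => ?_
        rw [MeasurableSpace.comap_comp]
        rfl
    _ = ⨆ n : ℕ, MeasurableSpace.generateFrom
          ((Set.preimage (fun y : Odometer k => y.1 n)) ''
            {s : Set (ZMod (Kseq k (n+1))) | ∃ b, s = {b}}) := by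
        refine iSup_congr fun n => ?_
        rw [top_eq_gen, MeasurableSpace.comap_generateFrom]
    _ = MeasurableSpace.generateFrom (⋃ n : ℕ, (Set.preimage (fun y : Odometer k => y.1 n)) ''
          {s : Set (ZMod (Kseq k (n+1))) | ∃ b, s = {b}}) := iSup_gen _
    _ = MeasurableSpace.generateFrom {s : Set (Odometer k) | ∃ n c, s = cylSet k n c} := by
        congr 1
        ext s
        simp only [Set.mem_iUnion, Set.mem_image, Set.mem_setOf_eq]
        constructor
        · rintro ⟨n, t, ⟨b, rfl⟩, rfl⟩
          exact ⟨n, b, rfl⟩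
        · rintro ⟨n, c, rfl⟩
          exact ⟨n, {c}, ⟨c, rfl⟩, rfl⟩

lemma proj_compat (hW : OdometerBasedCS α k W) (y : Odometer k) {n m : ℕ} (h : n ≤ m) :
    (((y.1 m).val : ℕ) : ZMod (Kseq k (n + 1))) = y.1 n := by
  haveI : ∀ m : ℕ, NeZero (Kseq k m) := fun m => ⟨by have := Kpos hW m; omega⟩
  induction m, h using Nat.le_induction with
  | base => simp [ZMod.natCast_val, ZMod.cast_id]
  | succ m hm ih =>
    haveI h9 : NeZero (Kseq k (m + 1) * k (m + 1)) := this (m + 2)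
    have hcomp := y.2 m
    have h1 : y.1 m = (((y.1 (m + 1)).val : ℕ) : ZMod (Kseq k (m + 1))) := by
      rw [← hcomp]; exact (ZMod.natCast_val _).symm
    have h2 : (y.1 m).val = (y.1 (m + 1)).val % Kseq k (m + 1) := by
      rw [h1, ZMod.val_natCast]
    set B := (y.1 (m + 1)).val with hB
    set KM := Kseq k (m + 1) with hKM
    obtain ⟨t, ht⟩ : Kseq k (n + 1) ∣ KM := Kdvd (by omega)
    have h5 : ((KM : ℕ) : ZMod (Kseq k (n + 1))) = 0 := by
      rw [ht]; push_cast [ZMod.natCast_self]; ring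
    have h4 : ((B % KM : ℕ) : ZMod (Kseq k (n + 1))) = (B : ZMod (Kseq k (n + 1))) := by
      conv_rhs => rw [← Nat.mod_add_div B KM]
      push_cast
      rw [h5]
      ring
    rw [← ih, h2]
    exact h4.symm

lemma isPiSystem_cyl (hW : OdometerBasedCS α k W) :
    IsPiSystem {s : Set (Odometer k) | ∃ n c, s = cylSet k n c} := by
  have key : ∀ (n m : ℕ) (c : ZMod (Kseq k (n+1))) (d : ZMod (Kseq k (m+1))), n ≤ m →
      (cylSet k n c ∩ cylSet k m d).Nonempty →
      cylSet k n c ∩ cylSet k m d ∈ {s : Set (Odometer k) | ∃ n c, s = cylSet k n c} := by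
    intro n m c d hnm hne
    obtain ⟨y, hy1, hy2⟩ := hne
    have hy1' : y.1 n = c := hy1
    have hy2' : y.1 m = d := hy2
    have hcd : ((d.val : ℕ) : ZMod (Kseq k (n + 1))) = c := by
      rw [← hy2', ← hy1']
      exact proj_compat hW y hnm
    have he : cylSet k n c ∩ cylSet k m d = cylSet k m d := by
      apply subset_antisymm Set.inter_subset_right
      intro z hz
      have hz' : z.1 m = d := hz
      refine ⟨?_, hz⟩
      show z.1 n = c
      rw [← hcd, ← hz']
      exact (proj_compat hW z hnm).symm
    rw [he]
    exact ⟨m, d, rfl⟩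
  rintro s ⟨n, c, rfl⟩ t ⟨m, d, rfl⟩ hne
  rcases le_total n m with h | h
  · exact key n m c d h hne
  · rw [Set.inter_comm]
    rw [Set.inter_comm] at hne
    exact key m n d c h hne

end MeasLemmas

section Main
variable {α : Type} [Fintype α] [MeasurableSpace α] [DiscreteMeasurableSpace α]
  {k : ℕ → ℕ} {W : ℕ → Set (List α)}

theorem main_thm (hW : OdometerBasedCS α k W)
    (ν : Measure (ℤ → α)) (hprob : IsProbabilityMeasure ν)
    (hinv : Measure.map shift ν = ν) (hsupp : ν (CSLimit W) = 1) :
    ∃ φ : (ℤ → α) → Odometer k,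
      (∀ x ∈ CSLimit W, ∀ n : ℕ, ∀ a : ℤ,
          (-(Kseq k (n + 1) : ℤ) < a ∧ a ≤ 0 ∧
            ∀ j : ℤ, subwordAt x (a + j * (Kseq k (n + 1) : ℤ)) (Kseq k (n + 1)) ∈ W (n + 1)) →
          (φ x).1 n = ((-a : ℤ) : ZMod (Kseq k (n + 1)))) ∧
      Measurable φ ∧
      (∀ x ∈ CSLimit W, φ (shift x) = odoMap k (φ x)) ∧
      IsHaarProb (Measure.map φ ν) := by
  haveI := hprob
  have hmeasφ : Measurable (Phi k W) := measurable_Phi hW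
  have hLmeas : MeasurableSet (CSLimit W) := measurableSet_CSLimit
  have hLcnull : ν (CSLimit W)ᶜ = 0 := by
    rw [measure_compl hLmeas (by rw [hsupp]; exact ENNReal.one_ne_top), measure_univ, hsupp,
      tsub_self]
  have hcongr : ∀ S T : Set (ℤ → α), S ∩ CSLimit W = T ∩ CSLimit W → ν S = ν T := by
    intro S T h
    apply measure_congr
    rw [MeasureTheory.ae_eq_set]
    constructor
    · refine measure_mono_null ?_ hLcnull
      intro z hz
      rcases hz with ⟨hzS, hzT⟩
      intro hzL
      exact hzT (Set.inter_subset_left (h ▸ Set.mem_inter hzS hzL))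
    · refine measure_mono_null ?_ hLcnull
      intro z hz
      rcases hz with ⟨hzT, hzS⟩
      intro hzL
      exact hzS (Set.inter_subset_left (h.symm ▸ Set.mem_inter hzT hzL))
  have hmshift : Measurable (shift : (ℤ → α) → (ℤ → α)) :=
    measurable_pi_lambda _ fun m => measurable_pi_apply _
  set μ := Measure.map (Phi k W) ν with hμ
  haveI hμprob : IsProbabilityMeasure μ := Measure.isProbabilityMeasure_map hmeasφ.aemeasurable
  have hstep : ∀ (n : ℕ) (c : ZMod (Kseq k (n + 1))),
      μ (cylSet k n (c - 1)) = μ (cylSet k n c) := by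
    intro n c
    rw [hμ, Measure.map_apply hmeasφ (measurableSet_cyl n (c - 1)),
      Measure.map_apply hmeasφ (measurableSet_cyl n c)]
    have h1 : ν (Phi k W ⁻¹' cylSet k n c) = ν (shift ⁻¹' (Phi k W ⁻¹' cylSet k n c)) := by
      conv_lhs => rw [← hinv]
      rw [Measure.map_apply hmshift (hmeasφ (measurableSet_cyl n c))]
    rw [h1]
    apply hcongr
    ext z
    simp only [Set.mem_inter_iff, Set.mem_preimage]
    constructor
    · rintro ⟨h2, hz⟩
      refine ⟨?_, hz⟩
      have h3 := Phi_shift hW hz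
      show Phi k W (shift z) ∈ cylSet k n c
      show (Phi k W (shift z)).1 n = c
      rw [h3]
      show (Phi k W z).1 n + 1 = c
      have h5 : (Phi k W z).1 n = c - 1 := h2
      rw [h5]; ring
    · rintro ⟨h2, hz⟩
      refine ⟨?_, hz⟩
      have h3 := Phi_shift hW hz
      have h4 : (Phi k W (shift z)).1 n = c := h2
      rw [h3] at h4
      have h5 : (Phi k W z).1 n + 1 = c := h4
      show (Phi k W z).1 n = c - 1
      rw [← h5]; ring
  have hall : ∀ (n : ℕ) (c d : ZMod (Kseq k (n + 1))),
      μ (cylSet k n c) = μ (cylSet k n d) := by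
    intro n c d
    haveI : NeZero (Kseq k (n + 1)) := ⟨by have := Kpos hW (n + 1); omega⟩
    have hplus : ∀ (c : ZMod (Kseq k (n + 1))) (t : ℕ),
        μ (cylSet k n c) = μ (cylSet k n (c + (t : ZMod (Kseq k (n + 1))))) := by
      intro c t
      induction t with
      | zero => simp
      | succ t ih =>
        rw [ih]
        have h6 := hstep n (c + ((t + 1 : ℕ) : ZMod (Kseq k (n + 1))))
        have h7 : c + ((t + 1 : ℕ) : ZMod (Kseq k (n + 1))) - 1
            = c + (t : ZMod (Kseq k (n + 1))) := by push_cast; ring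
        rw [h7] at h6
        exact h6
    have h8 : d = c + (((d - c).val : ℕ) : ZMod (Kseq k (n + 1))) := by
      rw [ZMod.natCast_val, ZMod.cast_id]; ring
    rw [h8]
    exact hplus c _
  refine ⟨Phi k W, ?_, hmeasφ, fun x hx => Phi_shift hW hx, ?_, ?_⟩
  · intro x hx n a h
    exact Phi_spec hW hx n a h
  · exact hμprob
  · intro g
    have hmeasadd : Measurable (fun y : Odometer k => g + y) := by
      have he : (fun y : Odometer k => g + y)
          = fun y : Odometer k => (⟨g.1 + y.1, (odometerSubgroup k).add_mem g.2 y.2⟩ : Odometer k) := rfl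
      rw [he]
      exact Measurable.subtype_mk (measurable_pi_lambda _ fun n =>
        measurable_from_top.comp ((measurable_pi_apply n).comp measurable_subtype_coe))
    haveI : IsProbabilityMeasure (Measure.map (fun y : Odometer k => g + y) μ) :=
      Measure.isProbabilityMeasure_map hmeasadd.aemeasurable
    refine ext_of_generate_finite _ (odo_gen hW) (isPiSystem_cyl hW) ?_ ?_
    · rintro s ⟨n, c, rfl⟩
      rw [Measure.map_apply hmeasadd (measurableSet_cyl n c)]
      have he : (fun y : Odometer k => g + y) ⁻¹' cylSet k n c = cylSet k n (c - g.1 n) := by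
        ext y
        simp only [Set.mem_preimage]
        constructor
        · intro h1
          have h2 : g.1 n + y.1 n = c := h1
          show y.1 n = c - g.1 n
          rw [← h2]; ring
        · intro h1
          have h2 : y.1 n = c - g.1 n := h1
          show g.1 n + y.1 n = c
          rw [h2]; ring
      rw [he]
      exact hall n _ c
    · simp [measure_univ]

end Main


/-- for any shift-invariant Borel probability measure `ν` on the limit `K` of
an odometer based construction sequence, the parsing map `φ : K → O`
(`φ(x)_n = r_{n+1}(x) mod K_{n+1}`, where `r_{n+1}(x) = -a` for the unique level-`(n+1)`
parsing offset `a` of `x`) is Borel measurable, intertwines the shift with `T_O`, and pushes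
`ν` forward to the Haar probability measure on `O`. -/
theorem parsing_map_pushes_invariant_measure_to_haar
    {α : Type} [Fintype α] [MeasurableSpace α] [DiscreteMeasurableSpace α]
    (k : ℕ → ℕ) (W : ℕ → Set (List α)) (hW : OdometerBasedCS α k W)
    (ν : Measure (ℤ → α)) (hprob : IsProbabilityMeasure ν)
    (hinv : Measure.map shift ν = ν) (hsupp : ν (CSLimit W) = 1) :
    ∃ φ : (ℤ → α) → Odometer k,
      (∀ x ∈ CSLimit W, ∀ n : ℕ, ∀ a : ℤ,
          (-(Kseq k (n + 1) : ℤ) < a ∧ a ≤ 0 ∧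
            ∀ j : ℤ, subwordAt x (a + j * (Kseq k (n + 1) : ℤ)) (Kseq k (n + 1)) ∈ W (n + 1)) →
          (φ x).1 n = ((-a : ℤ) : ZMod (Kseq k (n + 1)))) ∧
      Measurable φ ∧
      (∀ x ∈ CSLimit W, φ (shift x) = odoMap k (φ x)) ∧
      IsHaarProb (Measure.map φ ν) :=
  main_thm hW ν hprob hinv hsupp

end OdoPaper
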